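/- Let ι be a nonempty finite type and f : ι → ℝ. The softmax mean λ ↦ ∑ i, (Real.exp (λ * f i) / ∑ j, Real.exp (λ * f j)) * f i is monotone nondecreasing on ℝ, and it is strictly increasing if f is nonconstant (there exist i, j with f i ≠ f j). (This is the single-step form of the paper's Proposition that the performance p_λ of the rationality-λ policy is continuously and strictly increasing in λ.) -/

import Mathlib

open Real Finset

theorem softmax_mean_monotone_and_strictMono
    {ι : Type*} [Fintype ι] [Nonempty ι] (f : ι → ℝ) :
    Monotone (fun l : ℝ => ∑ i, (Real.exp (l * f i) / ∑ j, Real.exp (l * f j)) * f i) ∧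
      ((∃ i j, f i ≠ f j) →
        StrictMono (fun l : ℝ => ∑ i, (Real.exp (l * f i) / ∑ j, Real.exp (l * f j)) * f i)) := by
  set T : ℝ → ℝ := fun l => ∑ j, Real.exp (l * f j) with hT
  set S : ℝ → ℝ := fun l => ∑ j, Real.exp (l * f j) * f j with hS
  set Q : ℝ → ℝ := fun l => ∑ j, Real.exp (l * f j) * f j ^ 2 with hQ
  have hTpos : ∀ l, 0 < T l := fun l =>
    Finset.sum_pos (fun j _ => Real.exp_pos _) Finset.univ_nonempty
  have hfun : (fun l : ℝ => ∑ i, (Real.exp (l * f i) / ∑ j, Real.exp (l * f j)) * f i)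
      = fun l => S l / T l := by
    funext l
    simp [hS, hT, div_mul_eq_mul_div, ← Finset.sum_div]
  have hderiv : ∀ l, HasDerivAt (fun l => S l / T l)
      ((Q l * T l - S l * S l) / (T l) ^ 2) l := by
    intro l
    have hTd : HasDerivAt T (S l) l := by
      have : ∀ j ∈ (Finset.univ : Finset ι), HasDerivAt (fun l => Real.exp (l * f j))
          (Real.exp (l * f j) * f j) l := by
        intro j _
        simpa using ((hasDerivAt_id l).mul_const (f j)).exp
      simpa [hT, hS] using HasDerivAt.fun_sum this
    have hSd : HasDerivAt S (Q l) l := by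
      have : ∀ j ∈ (Finset.univ : Finset ι), HasDerivAt (fun l => Real.exp (l * f j) * f j)
          (Real.exp (l * f j) * f j ^ 2) l := by
        intro j _
        have h := (((hasDerivAt_id l).mul_const (f j)).exp).mul_const (f j)
        have : Real.exp (id l * f j) * (1 * f j) * f j = Real.exp (l * f j) * f j ^ 2 := by
          simp [sq]; ring
        rw [this] at h
        simpa using h
      simpa [hS, hQ] using HasDerivAt.fun_sum this
    exact hSd.div hTd (hTpos l).ne'
  have key : ∀ l, Q l * T l - S l * S l
      = T l * ∑ i, Real.exp (l * f i) * (f i - S l / T l) ^ 2 := by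
    intro l
    have expand : ∀ μ : ℝ, ∑ i, Real.exp (l * f i) * (f i - μ) ^ 2
        = Q l - 2 * μ * S l + μ ^ 2 * T l := by
      intro μ
      simp only [hQ, hS, hT, Finset.mul_sum, ← Finset.sum_sub_distrib,
        ← Finset.sum_add_distrib]
      exact Finset.sum_congr rfl fun i _ => by ring
    rw [expand (S l / T l)]
    have hT0 := (hTpos l).ne'
    field_simp
    ring
  have hnonneg : ∀ l, 0 ≤ Q l * T l - S l * S l := by
    intro l
    rw [key l]
    positivity
  rw [hfun]
  constructor
  · have hdiff : Differentiable ℝ (fun l => S l / T l) := fun l => (hderiv l).differentiableAt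
    refine monotone_of_deriv_nonneg hdiff fun l => ?_
    rw [(hderiv l).deriv]
    exact div_nonneg (hnonneg l) (by positivity)
  · rintro ⟨i, j, hij⟩
    refine strictMono_of_deriv_pos fun l => ?_
    rw [(hderiv l).deriv]
    apply div_pos _ (by positivity)
    rw [key l]
    apply mul_pos (hTpos l)
    have hex : ∃ k, f k ≠ S l / T l := by
      by_contra h
      push_neg at h
      exact hij ((h i).trans (h j).symm)
    obtain ⟨k, hk⟩ := hex
    refine Finset.sum_pos' (fun m _ => by positivity) ⟨k, Finset.mem_univ k, ?_⟩
    have h2 : (0:ℝ) < (f k - S l / T l) ^ 2 := by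
      have := sub_ne_zero.mpr hk
      positivity
    positivity
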